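/- arXiv:1605.08767 — 2 statements merged into one kernel-verified Lean document; each statement's English description precedes it below -/
import Mathlib

section
/- There exists c₀ > 0 such that for every c ∈ [0, c₀] and every z ∈ 𝓔, the unique solution w_c(z) of 1 + z w + w² + c w⁴ = 0 with Im w > 0 and |w| ≤ 5 satisfies the stability bound |z + w_c(z)| > 1/6. -/
/-- The spectral domain `𝓔 = {z = E + iη : |E| < 3, 0 < η ≤ 3}`. -/
def specDomainE : Set ℂ := {z : ℂ | |z.re| < 3 ∧ 0 < z.im ∧ z.im ≤ 3}

/-- Remark 4.3 of the paper: the stability bound `|z + w_c(z)| > 1/6` for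
the solution `w_c(z)` of `1 + z w + w² + c w⁴ = 0` with `Im w > 0` and `|w| ≤ 5`, on `𝓔`. -/
theorem quartic_solution_stability :
    ∃ c₀ : ℝ, 0 < c₀ ∧ ∀ c : ℝ, 0 ≤ c → c ≤ c₀ → ∀ z ∈ specDomainE,
      ∀ w : ℂ, 0 < w.im → ‖w‖ ≤ 5 →
        1 + z * w + w ^ 2 + (c : ℂ) * w ^ 4 = 0 →
        1 / 6 < ‖z + w‖ := by
  refine ⟨1/6250, by norm_num, fun c hc0 hc1 z _ w hwim hwle heq => ?_⟩
  have hwne : w ≠ 0 := fun h => by simp [h] at hwim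
  have hwpos : 0 < ‖w‖ := norm_pos_iff.mpr hwne
  have hkey : (z + w) * w = -(1 + (c : ℂ) * w ^ 4) := by linear_combination heq
  have habs : ‖z + w‖ * ‖w‖ = ‖1 + (c : ℂ) * w ^ 4‖ := by
    rw [← norm_mul, hkey, norm_neg]
  have htri : (1 : ℝ) ≤ ‖1 + (c : ℂ) * w ^ 4‖ + ‖(c : ℂ) * w ^ 4‖ := by
    calc (1 : ℝ) = ‖(1 + (c : ℂ) * w ^ 4) + (-((c : ℂ) * w ^ 4))‖ := by
          norm_num
      _ ≤ ‖1 + (c : ℂ) * w ^ 4‖ + ‖-((c : ℂ) * w ^ 4)‖ :=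
          norm_add_le _ _
      _ = ‖1 + (c : ℂ) * w ^ 4‖ + ‖(c : ℂ) * w ^ 4‖ := by
          rw [norm_neg]
  have hsm : ‖(c : ℂ) * w ^ 4‖ ≤ 1/10 := by
    rw [norm_mul, norm_pow, Complex.norm_of_nonneg hc0]
    calc c * ‖w‖ ^ 4 ≤ (1/6250) * 5 ^ 4 := by
          apply mul_le_mul hc1 (pow_le_pow_left₀ (norm_nonneg w) hwle 4) (by positivity) (by norm_num)
      _ = 1/10 := by norm_num
  have h9 : (9:ℝ)/10 ≤ ‖1 + (c : ℂ) * w ^ 4‖ := by linarith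
  nlinarith [habs, hwpos]
end

section
/- Let H be a real symmetric N×N matrix with eigenvalues λ₁, …, λ_N and an orthonormal basis of eigenvectors u₁, …, u_N satisfying ‖u_α‖_∞ ≤ K N^{−1/2} for all α, for some K ≥ 1. Let G(z) = (H − z)^{−1} and m(z) = N^{−1} Tr G(z), z = E + iη with η > 0. Then for all indices i, k ∈ {1, …, N}: (i) (1/N) Σ_{j=1}^N |G_{ij}(z)| · |G_{jk}(z)| ≤ K² Im m(z)/(Nη); in particular (1/N) Σ_{j=1}^N |G_{ij}(z)|² ≤ K² Im m(z)/(Nη); and (ii) (1/N) Σ_{j=1}^N |G_{ij}(z)| ≤ K (Im m(z)/(Nη))^{1/2}. -/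
noncomputable section

/-- The Green function (resolvent) `G(z) = (H - z)⁻¹` of a real matrix. -/
def greenFn {N : ℕ} (A : Matrix (Fin N) (Fin N) ℝ) (z : ℂ) : Matrix (Fin N) (Fin N) ℂ :=
  (A.map (fun x => (x : ℂ)) - z • (1 : Matrix (Fin N) (Fin N) ℂ))⁻¹

/-- The normalized trace `m(z) = N⁻¹ Tr G(z)` of the Green function. -/
def mTr {N : ℕ} (A : Matrix (Fin N) (Fin N) ℝ) (z : ℂ) : ℂ :=
  (greenFn A z).trace / (N : ℂ)

/-- Completeness of an orthonormal system of `N` vectors in `ℝ^N`. -/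
lemma ward_complete (N : ℕ) (u : Fin N → Fin N → ℝ)
    (horth : ∀ α β : Fin N, (∑ i, u α i * u β i) = if α = β then 1 else 0) :
    ∀ i k : Fin N, (∑ α, u α i * u α k) = if i = k then 1 else 0 := by
  intro i k
  have h1 : (Matrix.of u) * (Matrix.of u).transpose = 1 := by
    ext α β
    simp [Matrix.mul_apply, Matrix.one_apply, horth α β]
  have h2 : (Matrix.of u).transpose * (Matrix.of u) = 1 := mul_eq_one_comm.mp h1
  have h3 := congrFun (congrFun h2 i) k
  simpa [Matrix.mul_apply, Matrix.one_apply, mul_comm] using h3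

/-- Spectral representation of the Green function. -/
lemma ward_green_eq (N : ℕ) (A : Matrix (Fin N) (Fin N) ℝ)
    (lam : Fin N → ℝ) (u : Fin N → Fin N → ℝ)
    (hcomp : ∀ i k : Fin N, (∑ α, u α i * u α k) = if i = k then 1 else 0)
    (heig : ∀ α : Fin N, A.mulVec (u α) = lam α • u α)
    (z : ℂ) (hz : 0 < z.im) :
    ∀ i j, greenFn A z i j = ∑ α, ((u α i : ℂ) * u α j) / ((lam α : ℂ) - z) := by
  have hw : ∀ α, ((lam α : ℂ) - z) ≠ 0 := by
    intro α h
    have : ((lam α : ℂ) - z).im = 0 := by rw [h]; simp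
    simp [Complex.sub_im] at this
    linarith
  set M : Matrix (Fin N) (Fin N) ℂ :=
    Matrix.of (fun i j => ∑ α, ((u α i : ℂ) * u α j) / ((lam α : ℂ) - z)) with hM
  have key : (A.map (fun x => (x : ℂ)) - z • 1) * M = 1 := by
    ext i k
    rw [Matrix.mul_apply]
    have step1 : ∀ j : Fin N,
        (A.map (fun x => (x : ℂ)) - z • (1 : Matrix (Fin N) (Fin N) ℂ)) i j * M j k
        = ∑ α, ((A i j : ℂ) - z * (if i = j then 1 else 0)) * ((u α j : ℂ) * ((u α k : ℂ) / ((lam α : ℂ) - z))) := by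
      intro j
      simp only [hM, Matrix.of_apply, Finset.mul_sum, Matrix.sub_apply, Matrix.map_apply,
        Matrix.smul_apply, Matrix.one_apply, smul_eq_mul]
      congr 1
      ext α
      rw [mul_div_assoc]
    rw [Finset.sum_congr rfl (fun j _ => step1 j), Finset.sum_comm]
    have step2 : ∀ α : Fin N,
        (∑ j, ((A i j : ℂ) - z * (if i = j then 1 else 0)) * ((u α j : ℂ) * ((u α k : ℂ) / ((lam α : ℂ) - z))))
        = (u α i : ℂ) * (u α k : ℂ) := by
      intro α
      have hsum : (∑ j, ((A i j : ℂ) - z * (if i = j then 1 else 0)) * (u α j : ℂ))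
          = ((lam α : ℂ) - z) * (u α i : ℂ) := by
        have hr : (∑ j, A i j * u α j) = lam α * u α i := by
          have := congrFun (heig α) i
          simpa [Matrix.mulVec, dotProduct, Pi.smul_apply, smul_eq_mul] using this
        have : (∑ j, ((A i j : ℂ) * (u α j : ℂ))) = ((lam α : ℂ) * (u α i : ℂ)) := by
          have h2 := congrArg (fun r : ℝ => (r : ℂ)) hr
          push_cast at h2
          exact h2
        calc (∑ j, ((A i j : ℂ) - z * (if i = j then 1 else 0)) * (u α j : ℂ))
            = (∑ j, ((A i j : ℂ) * (u α j : ℂ))) - ∑ j, z * (if i = j then 1 else 0) * (u α j : ℂ) := by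
              rw [← Finset.sum_sub_distrib]; congr 1; ext j; ring
          _ = (lam α : ℂ) * (u α i : ℂ) - z * (u α i : ℂ) := by
              rw [this]; congr 1
              simp [Finset.sum_ite_eq, mul_ite]
          _ = ((lam α : ℂ) - z) * (u α i : ℂ) := by ring
      calc (∑ j, ((A i j : ℂ) - z * (if i = j then 1 else 0)) * ((u α j : ℂ) * ((u α k : ℂ) / ((lam α : ℂ) - z))))
          = (∑ j, ((A i j : ℂ) - z * (if i = j then 1 else 0)) * (u α j : ℂ)) * ((u α k : ℂ) / ((lam α : ℂ) - z)) := by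
            rw [Finset.sum_mul]; congr 1; ext j; ring
        _ = ((lam α : ℂ) - z) * (u α i : ℂ) * ((u α k : ℂ) / ((lam α : ℂ) - z)) := by rw [hsum]
        _ = (u α i : ℂ) * (u α k : ℂ) := by
            field_simp [hw α]
    rw [Finset.sum_congr rfl (fun α _ => step2 α)]
    have : (∑ α, (u α i : ℂ) * (u α k : ℂ)) = ((if i = k then 1 else 0 : ℝ) : ℂ) := by
      have h2 := congrArg (fun r : ℝ => (r : ℂ)) (hcomp i k)
      push_cast at h2
      exact h2
    rw [this, Matrix.one_apply]
    split <;> simp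
  have hGM : greenFn A z = M := Matrix.inv_eq_right_inv key
  intro i j
  rw [hGM]
  rfl

/-- Ward identity: row sums of squared moduli of the Green function. -/
lemma ward_sq_sum (N : ℕ) (A : Matrix (Fin N) (Fin N) ℝ)
    (lam : Fin N → ℝ) (u : Fin N → Fin N → ℝ)
    (horth : ∀ α β : Fin N, (∑ i, u α i * u β i) = if α = β then 1 else 0)
    (z : ℂ)
    (hG : ∀ i j, greenFn A z i j = ∑ α, ((u α i : ℂ) * u α j) / ((lam α : ℂ) - z)) :
    ∀ i, (∑ j, ‖greenFn A z i j‖ ^ 2)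
        = ∑ α, (u α i) ^ 2 / Complex.normSq ((lam α : ℂ) - z) := by
  intro i
  set a : Fin N → ℂ := fun α => (u α i : ℂ) / ((lam α : ℂ) - z) with ha
  have hGa : ∀ j, greenFn A z i j = ∑ α, a α * (u α j : ℂ) := by
    intro j
    rw [hG i j]
    exact Finset.sum_congr rfl fun α _ => (mul_div_right_comm _ _ _)
  have hCj : ∀ j, (starRingEnd ℂ) (greenFn A z i j)
      = ∑ β, (starRingEnd ℂ) (a β) * (u β j : ℂ) := by
    intro j
    rw [hGa j, map_sum]
    exact Finset.sum_congr rfl fun β _ => by rw [map_mul, Complex.conj_ofReal]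
  have hC : (∑ j, greenFn A z i j * (starRingEnd ℂ) (greenFn A z i j))
      = ((∑ α, (u α i) ^ 2 / Complex.normSq ((lam α : ℂ) - z) : ℝ) : ℂ) := by
    calc (∑ j, greenFn A z i j * (starRingEnd ℂ) (greenFn A z i j))
        = ∑ j, ∑ α, ∑ β, (a α * (starRingEnd ℂ) (a β)) * ((u α j : ℂ) * (u β j : ℂ)) := by
          refine Finset.sum_congr rfl fun j _ => ?_
          rw [hCj j, hGa j, Finset.sum_mul_sum]
          exact Finset.sum_congr rfl fun α _ => Finset.sum_congr rfl fun β _ => by ring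
      _ = ∑ α, ∑ β, (a α * (starRingEnd ℂ) (a β)) * (∑ j, (u α j : ℂ) * (u β j : ℂ)) := by
          rw [Finset.sum_comm]
          refine Finset.sum_congr rfl fun α _ => ?_
          rw [Finset.sum_comm]
          exact Finset.sum_congr rfl fun β _ => (Finset.mul_sum _ _ _).symm
      _ = ∑ α, ∑ β, (a α * (starRingEnd ℂ) (a β)) * (if α = β then 1 else 0) := by
          refine Finset.sum_congr rfl fun α _ => Finset.sum_congr rfl fun β _ => ?_
          congr 1
          have h2 := congrArg (fun r : ℝ => (r : ℂ)) (horth α β)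
          push_cast at h2
          rw [h2]
          split <;> simp
      _ = ∑ α, a α * (starRingEnd ℂ) (a α) := by
          refine Finset.sum_congr rfl fun α _ => ?_
          simp [mul_ite]
      _ = ∑ α, ((Complex.normSq (a α) : ℝ) : ℂ) := by
          refine Finset.sum_congr rfl fun α _ => ?_
          rw [Complex.mul_conj]
      _ = ((∑ α, (u α i) ^ 2 / Complex.normSq ((lam α : ℂ) - z) : ℝ) : ℂ) := by
          push_cast
          refine Finset.sum_congr rfl fun α _ => ?_
          rw [ha]
          simp only [Complex.normSq_div, Complex.normSq_ofReal]
          push_cast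
          ring
  have hre : (∑ j, ‖greenFn A z i j‖ ^ 2)
      = ∑ j, Complex.normSq (greenFn A z i j) :=
    Finset.sum_congr rfl fun j _ => Complex.sq_norm _
  rw [hre]
  have : ((∑ j, Complex.normSq (greenFn A z i j) : ℝ) : ℂ)
      = ((∑ α, (u α i) ^ 2 / Complex.normSq ((lam α : ℂ) - z) : ℝ) : ℂ) := by
    rw [← hC]
    push_cast
    exact Finset.sum_congr rfl fun j _ => (Complex.mul_conj _).symm
  exact_mod_cast this

/-- The imaginary part of the normalized trace of the Green function. -/
lemma ward_im_mTr (N : ℕ) (A : Matrix (Fin N) (Fin N) ℝ)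
    (lam : Fin N → ℝ) (u : Fin N → Fin N → ℝ)
    (horth : ∀ α β : Fin N, (∑ i, u α i * u β i) = if α = β then 1 else 0)
    (z : ℂ)
    (hG : ∀ i j, greenFn A z i j = ∑ α, ((u α i : ℂ) * u α j) / ((lam α : ℂ) - z)) :
    (mTr A z).im = (∑ α, z.im / Complex.normSq ((lam α : ℂ) - z)) / N := by
  have htr : (greenFn A z).trace = ∑ α, ((lam α : ℂ) - z)⁻¹ := by
    rw [Matrix.trace]
    calc (∑ i, (greenFn A z).diag i)
        = ∑ i, ∑ α, ((u α i : ℂ) * u α i) / ((lam α : ℂ) - z) :=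
          Finset.sum_congr rfl fun i _ => hG i i
      _ = ∑ α, (∑ i, ((u α i : ℂ) * u α i)) / ((lam α : ℂ) - z) := by
          rw [Finset.sum_comm]
          exact Finset.sum_congr rfl fun α _ => (Finset.sum_div _ _ _).symm
      _ = ∑ α, ((lam α : ℂ) - z)⁻¹ := by
          refine Finset.sum_congr rfl fun α _ => ?_
          have h2 := congrArg (fun r : ℝ => (r : ℂ)) (horth α α)
          push_cast at h2
          simp at h2
          rw [h2, one_div]
  have : mTr A z = (∑ α, ((lam α : ℂ) - z)⁻¹) / ((N : ℝ) : ℂ) := by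
    rw [mTr, htr]; norm_num
  rw [this, Complex.div_ofReal_im, Complex.im_sum]
  congr 1
  refine Finset.sum_congr rfl fun α _ => ?_
  rw [Complex.inv_im]
  have : ((lam α : ℂ) - z).im = -z.im := by simp [Complex.sub_im]
  rw [this]
  ring

/-- quantitative core of Lemma 6.1 in the paper: deterministic Ward-type
identities. If a real symmetric `N×N` matrix has an orthonormal eigenbasis `u` with
`‖u_α‖_∞ ≤ K N^{−1/2}`, then for all `i, k`:
`N⁻¹ ∑_j |G_{ij}||G_{jk}| ≤ K² Im m/(Nη)`, `N⁻¹ ∑_j |G_{ij}|² ≤ K² Im m/(Nη)` and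
`N⁻¹ ∑_j |G_{ij}| ≤ K (Im m/(Nη))^{1/2}`. -/
theorem ward_identities
    (N : ℕ) (hN : 0 < N) (A : Matrix (Fin N) (Fin N) ℝ) (hA : A.IsSymm)
    (lam : Fin N → ℝ) (u : Fin N → Fin N → ℝ) (K : ℝ) (hK : 1 ≤ K)
    (horth : ∀ α β : Fin N, (∑ i, u α i * u β i) = if α = β then 1 else 0)
    (heig : ∀ α : Fin N, A.mulVec (u α) = lam α • u α)
    (hdeloc : ∀ α i : Fin N, |u α i| ≤ K / Real.sqrt N)
    (z : ℂ) (hz : 0 < z.im) :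
    ∀ i k : Fin N,
      (1 / N : ℝ) * (∑ j, ‖greenFn A z i j‖ * ‖greenFn A z j k‖)
          ≤ K ^ 2 * (mTr A z).im / (N * z.im) ∧
      (1 / N : ℝ) * (∑ j, ‖greenFn A z i j‖ ^ 2)
          ≤ K ^ 2 * (mTr A z).im / (N * z.im) ∧
      (1 / N : ℝ) * (∑ j, ‖greenFn A z i j‖)
          ≤ K * Real.sqrt ((mTr A z).im / (N * z.im)) := by
  have hcomp := ward_complete N u horth
  have hG := ward_green_eq N A lam u hcomp heig z hz
  have hSq := ward_sq_sum N A lam u horth z hG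
  have hIm := ward_im_mTr N A lam u horth z hG
  set η := z.im with hη
  set J : Fin N → ℝ := fun α => Complex.normSq ((lam α : ℂ) - z) with hJdef
  have hNr : (0 : ℝ) < (N : ℝ) := by exact_mod_cast hN
  have hK0 : (0 : ℝ) ≤ K := le_trans zero_le_one hK
  have hw : ∀ α, ((lam α : ℂ) - z) ≠ 0 := by
    intro α h
    have : ((lam α : ℂ) - z).im = 0 := by rw [h]; simp
    simp [Complex.sub_im] at this
    linarith
  have hJ : ∀ α, 0 < J α := fun α => Complex.normSq_pos.mpr (hw α)
  -- the key identity: ∑ J α ⁻¹ = N * Im m / η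
  have hT : (∑ α, (J α)⁻¹) = (N : ℝ) * (mTr A z).im / η := by
    rw [hIm]
    have : (∑ α, η / J α) = η * ∑ α, (J α)⁻¹ := by
      rw [Finset.mul_sum]
      exact Finset.sum_congr rfl fun α _ => div_eq_mul_inv _ _
    rw [this]
    field_simp
  have hIm0 : 0 ≤ (mTr A z).im := by
    rw [hIm]
    apply div_nonneg _ (le_of_lt hNr)
    exact Finset.sum_nonneg fun α _ => div_nonneg (le_of_lt hz) (le_of_lt (hJ α))
  -- bound on the eigenvector entries squared
  have hu2 : ∀ α i : Fin N, (u α i) ^ 2 ≤ K ^ 2 / (N : ℝ) := by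
    intro α i
    have h1 : (u α i) ^ 2 ≤ (K / Real.sqrt (N : ℝ)) ^ 2 := by
      rw [← sq_abs]
      exact pow_le_pow_left₀ (abs_nonneg _) (hdeloc α i) 2
    rwa [div_pow, Real.sq_sqrt (le_of_lt hNr)] at h1
  -- the main deterministic bound on ∑_j |G_{ij}|²
  have hSb : ∀ i : Fin N, (∑ j, ‖greenFn A z i j‖ ^ 2)
      ≤ K ^ 2 * (mTr A z).im / η := by
    intro i
    rw [hSq i]
    calc (∑ α, (u α i) ^ 2 / J α)
        ≤ ∑ α, (K ^ 2 / (N : ℝ)) / J α :=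
          Finset.sum_le_sum fun α _ => (div_le_div_iff_of_pos_right (hJ α)).mpr (hu2 α i)
      _ = (K ^ 2 / (N : ℝ)) * ∑ α, (J α)⁻¹ := by
          rw [Finset.mul_sum]
          exact Finset.sum_congr rfl fun α _ => div_eq_mul_inv _ _
      _ = K ^ 2 * (mTr A z).im / η := by
          rw [hT]
          field_simp
  -- symmetry of the Green function
  have hsym : ∀ j k : Fin N, greenFn A z j k = greenFn A z k j := by
    intro j k
    rw [hG j k, hG k j]
    exact Finset.sum_congr rfl fun α _ => by ring
  intro i k
  refine ⟨?_, ?_, ?_⟩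
  · -- (i)
    have h1 : (∑ j, ‖greenFn A z i j‖ * ‖greenFn A z j k‖)
        ≤ ((∑ j, ‖greenFn A z i j‖ ^ 2)
            + (∑ j, ‖greenFn A z k j‖ ^ 2)) / 2 := by
      have hptw : ∀ j : Fin N, ‖greenFn A z i j‖ * ‖greenFn A z j k‖
          ≤ (‖greenFn A z i j‖ ^ 2 + ‖greenFn A z k j‖ ^ 2) / 2 := by
        intro j
        rw [hsym j k]
        nlinarith [sq_nonneg (‖greenFn A z i j‖ - ‖greenFn A z k j‖)]
      calc (∑ j, ‖greenFn A z i j‖ * ‖greenFn A z j k‖)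
          ≤ ∑ j, (‖greenFn A z i j‖ ^ 2 + ‖greenFn A z k j‖ ^ 2) / 2 :=
            Finset.sum_le_sum fun j _ => hptw j
        _ = ((∑ j, ‖greenFn A z i j‖ ^ 2)
            + (∑ j, ‖greenFn A z k j‖ ^ 2)) / 2 := by
            rw [← Finset.sum_div, Finset.sum_add_distrib]
    have h2 : (∑ j, ‖greenFn A z i j‖ * ‖greenFn A z j k‖)
        ≤ K ^ 2 * (mTr A z).im / η := by
      calc (∑ j, ‖greenFn A z i j‖ * ‖greenFn A z j k‖)
          ≤ _ := h1
        _ ≤ (K ^ 2 * (mTr A z).im / η + K ^ 2 * (mTr A z).im / η) / 2 := by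
            apply div_le_div_of_nonneg_right _ (by norm_num)
            exact add_le_add (hSb i) (hSb k)
        _ = K ^ 2 * (mTr A z).im / η := by ring
    calc (1 / (N : ℝ)) * (∑ j, ‖greenFn A z i j‖ * ‖greenFn A z j k‖)
        ≤ (1 / (N : ℝ)) * (K ^ 2 * (mTr A z).im / η) :=
          mul_le_mul_of_nonneg_left h2 (by positivity)
      _ = K ^ 2 * (mTr A z).im / ((N : ℝ) * η) := by
          field_simp
  · -- (ii)
    calc (1 / (N : ℝ)) * (∑ j, ‖greenFn A z i j‖ ^ 2)
        ≤ (1 / (N : ℝ)) * (K ^ 2 * (mTr A z).im / η) :=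
          mul_le_mul_of_nonneg_left (hSb i) (by positivity)
      _ = K ^ 2 * (mTr A z).im / ((N : ℝ) * η) := by
          field_simp
  · -- (iii)
    set S : ℝ := ∑ j, ‖greenFn A z i j‖ ^ 2 with hSdef
    have hS0 : 0 ≤ S := Finset.sum_nonneg fun j _ => sq_nonneg _
    have hcs : (∑ j, ‖greenFn A z i j‖)
        ≤ Real.sqrt S * Real.sqrt (N : ℝ) := by
      have := Real.sum_mul_le_sqrt_mul_sqrt Finset.univ
        (fun j => ‖greenFn A z i j‖) (fun _ => 1)
      simpa [hSdef] using this
    have hsn : (0 : ℝ) < Real.sqrt (N : ℝ) := Real.sqrt_pos.mpr hNr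
    have hstep : (1 / (N : ℝ)) * (Real.sqrt S * Real.sqrt (N : ℝ))
        = Real.sqrt (S / (N : ℝ)) := by
      have hmm : Real.sqrt (N : ℝ) * Real.sqrt (N : ℝ) = (N : ℝ) :=
        Real.mul_self_sqrt (le_of_lt hNr)
      rw [Real.sqrt_div hS0, eq_div_iff (ne_of_gt hsn), ← hmm]
      field_simp
      rw [Real.sqrt_sq hsn.le]; ring
    have hdivle : S / (N : ℝ) ≤ K ^ 2 * ((mTr A z).im / ((N : ℝ) * η)) := by
      calc S / (N : ℝ) ≤ (K ^ 2 * (mTr A z).im / η) / (N : ℝ) :=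
            (div_le_div_iff_of_pos_right hNr).mpr (hSb i)
        _ = K ^ 2 * ((mTr A z).im / ((N : ℝ) * η)) := by ring
    calc (1 / (N : ℝ)) * (∑ j, ‖greenFn A z i j‖)
        ≤ (1 / (N : ℝ)) * (Real.sqrt S * Real.sqrt (N : ℝ)) :=
          mul_le_mul_of_nonneg_left hcs (by positivity)
      _ = Real.sqrt (S / (N : ℝ)) := hstep
      _ ≤ Real.sqrt (K ^ 2 * ((mTr A z).im / ((N : ℝ) * η))) := Real.sqrt_le_sqrt hdivle
      _ = K * Real.sqrt ((mTr A z).im / ((N : ℝ) * η)) := by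
          rw [Real.sqrt_mul (sq_nonneg K), Real.sqrt_sq hK0]

end
end
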